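/- Let X be a real Banach space with dim X ≥ 2, p > 1, F(x) = (1/p)‖x‖^p, and let j_p : X → X* be a selection of the duality mapping. For every τ̄ > 0 there exists a constant C > 0 such that for all x ∈ S_X and all 0 < τ ≤ τ̄: ρ_{F,x}^{j_p(x)}(τ) ≤ C·ρ_X(τ). -/

import Mathlib

open scoped ENNReal

/-- The modulus of smoothness of a normed space `Y`:
`ρ_Y(τ) = sup {(‖x+τy‖+‖x−τy‖)/2 − 1 : x, y ∈ S_Y}`. -/
noncomputable def rhoSpace (Y : Type*) [NormedAddCommGroup Y] [NormedSpace ℝ Y] (τ : ℝ) : ℝ :=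
  sSup {r : ℝ | ∃ x y : Y, ‖x‖ = 1 ∧ ‖y‖ = 1 ∧ r = (‖x + τ • y‖ + ‖x - τ • y‖) / 2 - 1}

/-- The modulus of convexity of a normed space `Y`:
`δ_Y(ε) = inf {1 − ‖y+ỹ‖/2 : y, ỹ ∈ S_Y, ‖y−ỹ‖ = ε}`. -/
noncomputable def deltaSpace (Y : Type*) [NormedAddCommGroup Y] [NormedSpace ℝ Y] (ε : ℝ) : ℝ :=
  sInf {r : ℝ | ∃ y z : Y, ‖y‖ = 1 ∧ ‖z‖ = 1 ∧ ‖y - z‖ = ε ∧ r = 1 - ‖y + z‖ / 2}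

/-- `φ` is a subgradient of `F` at `x`: `F(y) ≥ F(x) + ⟨φ, y−x⟩` for all `y`. -/
def IsSubgradient {X : Type*} [NormedAddCommGroup X] [NormedSpace ℝ X]
    (F : X → ℝ) (x : X) (φ : X →L[ℝ] ℝ) : Prop :=
  ∀ y : X, F x + φ (y - x) ≤ F y

/-- The linearization error (Bregman divergence)
`Δ_F^{φ}(y,x) = F(y) − F(x) − ⟨φ, y−x⟩`. -/
def breg {X : Type*} [NormedAddCommGroup X] [NormedSpace ℝ X]
    (F : X → ℝ) (φ : X →L[ℝ] ℝ) (y x : X) : ℝ :=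
  F y - F x - φ (y - x)

/-- The modulus of smoothness of `F` at `x` w.r.t. `φ`, with values in `[0,∞]`:
`ρ_{F,x}^{φ}(τ) = sup {|Δ_F^{φ}(y,x)| : ‖y−x‖ = τ}`. -/
noncomputable def rhoF {X : Type*} [NormedAddCommGroup X] [NormedSpace ℝ X]
    (F : X → ℝ) (x : X) (φ : X →L[ℝ] ℝ) (τ : ℝ) : ℝ≥0∞ :=
  ⨆ y ∈ {y : X | ‖y - x‖ = τ}, ENNReal.ofReal |breg F φ y x|

/-- The modulus of convexity of `F` at `x` w.r.t. `φ`, with values in `[0,∞]`: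
`δ_{F,x}^{φ}(τ) = inf {|Δ_F^{φ}(y,x)| : ‖y−x‖ = τ}`. -/
noncomputable def deltaF {X : Type*} [NormedAddCommGroup X] [NormedSpace ℝ X]
    (F : X → ℝ) (x : X) (φ : X →L[ℝ] ℝ) (τ : ℝ) : ℝ≥0∞ :=
  ⨅ y ∈ {y : X | ‖y - x‖ = τ}, ENNReal.ofReal |breg F φ y x|

/-- `jp` is a selection of the duality mapping with exponent `p`:
`⟨j_p(x), x⟩ = ‖j_p(x)‖·‖x‖` and `‖j_p(x)‖ = ‖x‖^{p−1}` for every `x`. -/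
def IsDualitySelection {X : Type*} [NormedAddCommGroup X] [NormedSpace ℝ X]
    (p : ℝ) (jp : X → X →L[ℝ] ℝ) : Prop :=
  ∀ x : X, jp x x = ‖jp x‖ * ‖x‖ ∧ ‖jp x‖ = ‖x‖ ^ (p - 1)

/-! ### Auxiliary scalar lemmas -/

/-- Bernoulli's inequality for rpow, lower form: `1 + q(t-1) ≤ t^q` for `q ≥ 1`, `t ≥ 0`. -/
lemma aux_bern_lower {q t : ℝ} (hq : 1 ≤ q) (ht : 0 ≤ t) : 1 + q * (t - 1) ≤ t ^ q := by
  have := one_add_mul_self_le_rpow_one_add (s := t - 1) (by linarith) hq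
  simpa using this

/-- Upper Bernoulli form: `t^q - 1 ≤ q t^{q-1} (t-1)` for `q ≥ 1`, `t > 0`. -/
lemma aux_bern_upper {q t : ℝ} (hq : 1 ≤ q) (ht : 0 < t) :
    t ^ q - 1 ≤ q * t ^ (q - 1) * (t - 1) := by
  set A := t ^ (q - 1) with hA
  have hApos : 0 < A := Real.rpow_pos_of_pos ht _
  have htq : t ^ q = A * t := by
    rw [hA, Real.rpow_sub ht, Real.rpow_one, div_mul_cancel₀ _ ht.ne']
  have hb : 1 + q * (t⁻¹ - 1) ≤ (t⁻¹) ^ q :=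
    aux_bern_lower hq (by positivity)
  have hinv : (t⁻¹ : ℝ) ^ q = (A * t)⁻¹ := by
    rw [Real.inv_rpow ht.le, htq]
  rw [hinv] at hb
  have hAt : 0 < A * t := by positivity
  have hb2 : (A * t) * (1 + q * (t⁻¹ - 1)) ≤ (A * t) * (A * t)⁻¹ :=
    mul_le_mul_of_nonneg_left hb hAt.le
  rw [mul_inv_cancel₀ hAt.ne'] at hb2
  have htt : t * t⁻¹ = 1 := mul_inv_cancel₀ ht.ne'
  have e : A * t * (1 + q * (t⁻¹ - 1)) = A * t + q * A * (t * t⁻¹) - q * (A * t) := by ring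
  rw [htt, mul_one] at e
  rw [e] at hb2
  rw [htq]
  linarith

/-- `ψ(t) = (t^p-1)/p - (t-1) ≥ 0`. -/
lemma aux_psi_nonneg {p t : ℝ} (hp : 1 < p) (ht : 0 ≤ t) :
    0 ≤ (t ^ p - 1) / p - (t - 1) := by
  have h := aux_bern_lower hp.le ht
  have hp0 : (0:ℝ) < p := by linarith
  rw [sub_nonneg, le_div_iff₀ hp0]
  nlinarith

lemma aux_psi_step1 {p t : ℝ} (hp : 1 < p) (ht : 0 ≤ t) :
    (t ^ p - 1) / p - (t - 1) ≤ (t ^ (p - 1) - 1) * (t - 1) := by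
  have hp0 : (0:ℝ) < p := by linarith
  rcases eq_or_lt_of_le ht with h0 | h0
  · have ht0 : t = 0 := h0.symm
    subst ht0
    rw [Real.zero_rpow (by linarith : p ≠ 0), Real.zero_rpow (by linarith : p - 1 ≠ 0)]
    have hinv : (0:ℝ) ≤ p⁻¹ := by positivity
    have h6 : ((0:ℝ) - 1) / p = -p⁻¹ := by ring
    rw [h6]
    nlinarith
  · have h := aux_bern_upper hp.le h0
    have hq : (t ^ p - 1) / p ≤ t ^ (p - 1) * (t - 1) := by
      rw [div_le_iff₀ hp0]
      calc t ^ p - 1 ≤ p * t ^ (p - 1) * (t - 1) := h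
        _ = t ^ (p-1) * (t-1) * p := by ring
    linarith

lemma aux_psi_step2 {p B t : ℝ} (hp : 1 < p) (hB : 1 ≤ B) (ht0 : 0 ≤ t) (htB : t ≤ B) :
    (t ^ (p - 1) - 1) * (t - 1) ≤ (1 + (p - 1) * max 1 (B ^ (p - 2))) * (t - 1) ^ 2 := by
  set L : ℝ := 1 + (p - 1) * max 1 (B ^ (p - 2)) with hLdef
  have hmax1 : (1:ℝ) ≤ max 1 (B ^ (p - 2)) := le_max_left _ _
  have hL1 : 1 ≤ L := by nlinarith [hmax1]
  have hLp : p - 1 ≤ L := by nlinarith [hmax1]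
  rcases le_total 1 t with h1 | h1
  · -- t ≥ 1
    have key : t ^ (p - 1) - 1 ≤ L * (t - 1) := by
      rcases le_total p 2 with hp2 | hp2
      · have : t ^ (p-1) ≤ t ^ (1:ℝ) :=
          Real.rpow_le_rpow_of_exponent_le h1 (by linarith)
        rw [Real.rpow_one] at this
        nlinarith
      · have hb := aux_bern_upper (q := p - 1) (by linarith) (by linarith : (0:ℝ) < t)
        have h2 : t ^ (p - 1 - 1) ≤ B ^ (p - 2) := by
          rw [show p - 1 - 1 = p - 2 by ring]
          exact Real.rpow_le_rpow ht0 htB (by linarith)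
        have h3 : B ^ (p-2) ≤ max 1 (B ^ (p - 2)) := le_max_right _ _
        have h4 : (0:ℝ) ≤ t ^ (p-1-1) := (Real.rpow_pos_of_pos (by linarith) _).le
        have step : (p-1) * t ^ (p-1-1) * (t-1) ≤ (p-1) * (max 1 (B ^ (p-2))) * (t-1) := by
          apply mul_le_mul_of_nonneg_right _ (by linarith)
          exact mul_le_mul_of_nonneg_left (h2.trans h3) (by linarith)
        have step2 : (p-1) * (max 1 (B ^ (p-2))) * (t-1) ≤ L * (t-1) := by
          apply mul_le_mul_of_nonneg_right _ (by linarith)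
          rw [hLdef]; linarith
        linarith
    nlinarith [key, sq_nonneg (t-1)]
  · -- t ≤ 1
    have key : 1 - t ^ (p - 1) ≤ L * (1 - t) := by
      rcases le_total p 2 with hp2 | hp2
      · rcases eq_or_lt_of_le ht0 with h0 | h0
        · rw [← h0, Real.zero_rpow (by linarith : p - 1 ≠ 0)]
          nlinarith
        · have : t ^ (1:ℝ) ≤ t ^ (p - 1) :=
            Real.rpow_le_rpow_of_exponent_ge h0 h1 (by linarith)
          rw [Real.rpow_one] at this
          nlinarith
      · have hb := aux_bern_lower (q := p - 1) (by linarith) ht0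
        nlinarith
    have htp1 : t ^ (p - 1) ≤ 1 := Real.rpow_le_one ht0 h1 (by linarith)
    nlinarith [key]

lemma aux_psi_bound {p B t : ℝ} (hp : 1 < p) (hB : 1 ≤ B) (ht0 : 0 ≤ t) (htB : t ≤ B) :
    (t ^ p - 1) / p - (t - 1) ≤ (1 + (p - 1) * max 1 (B ^ (p - 2))) * (t - 1) ^ 2 :=
  (aux_psi_step1 hp ht0).trans (aux_psi_step2 hp hB ht0 htB)

/-- `√(1+s) - 1 ≥ s / (1 + √(1+S))` for `0 ≤ s ≤ S`. -/
lemma aux_sqrt_lower {s S : ℝ} (hs : 0 ≤ s) (hS : s ≤ S) :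
    s / (1 + Real.sqrt (1 + S)) ≤ Real.sqrt (1 + s) - 1 := by
  have hS0 : (0:ℝ) ≤ S := le_trans hs hS
  set r := Real.sqrt (1 + s) with hr
  set R := Real.sqrt (1 + S) with hR
  have hr1 : 1 ≤ r := by
    rw [hr]
    exact Real.le_sqrt_of_sq_le (by nlinarith)
  have hR1 : 1 ≤ R := by
    rw [hR]
    exact Real.le_sqrt_of_sq_le (by nlinarith)
  have hrR : r ≤ R := Real.sqrt_le_sqrt (by linarith)
  have hr2 : r ^ 2 = 1 + s := Real.sq_sqrt (by linarith)
  have hD : (0:ℝ) < 1 + R := by linarith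
  rw [div_le_iff₀ hD]
  nlinarith [hr2, hrR, hr1]

/-! ### Bounds on `rhoSpace` -/

section RhoSpace

variable (X : Type*) [NormedAddCommGroup X] [NormedSpace ℝ X]

lemma rhoSpace_bddAbove (τ : ℝ) :
    BddAbove {r : ℝ | ∃ x y : X, ‖x‖ = 1 ∧ ‖y‖ = 1 ∧
      r = (‖x + τ • y‖ + ‖x - τ • y‖) / 2 - 1} := by
  refine ⟨|τ|, fun r hr => ?_⟩
  obtain ⟨x, y, hx, hy, rfl⟩ := hr
  have h1 : ‖x + τ • y‖ ≤ 1 + |τ| := by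
    calc ‖x + τ • y‖ ≤ ‖x‖ + ‖τ • y‖ := norm_add_le _ _
      _ = 1 + |τ| := by rw [hx, norm_smul, hy, Real.norm_eq_abs, mul_one]
  have h2 : ‖x - τ • y‖ ≤ 1 + |τ| := by
    calc ‖x - τ • y‖ ≤ ‖x‖ + ‖τ • y‖ := norm_sub_le _ _
      _ = 1 + |τ| := by rw [hx, norm_smul, hy, Real.norm_eq_abs, mul_one]
  linarith

lemma le_rhoSpace {x y : X} (hx : ‖x‖ = 1) (hy : ‖y‖ = 1) (τ : ℝ) :
    (‖x + τ • y‖ + ‖x - τ • y‖) / 2 - 1 ≤ rhoSpace X τ :=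
  le_csSup (rhoSpace_bddAbove X τ) ⟨x, y, hx, hy, rfl⟩

set_option maxHeartbeats 1600000 in
/-- Key geometric lower bound: there is `μ > 0` with
`√(1+μτ²) - 1 ≤ ρ_X(τ)` for all `τ`. -/
lemma rhoSpace_lower (hdim : 2 ≤ Module.rank ℝ X) :
    ∃ μ : ℝ, 0 < μ ∧ ∀ τ : ℝ, Real.sqrt (1 + μ * τ ^ 2) - 1 ≤ rhoSpace X τ := by
  -- obtain two linearly independent vectors
  have h1 : 1 < Module.rank ℝ X := by
    refine lt_of_lt_of_le ?_ hdim
    norm_num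
  have hnt : Nontrivial X := by
    rw [← rank_pos_iff_nontrivial (R := ℝ)]
    refine lt_of_lt_of_le ?_ hdim
    norm_num
  obtain ⟨e1, he1⟩ := exists_ne (0 : X)
  obtain ⟨e2, hind⟩ := exists_linearIndependent_pair_of_one_lt_rank h1 he1
  have hpair : ∀ s t : ℝ, s • e1 + t • e2 = 0 → s = 0 ∧ t = 0 :=
    LinearIndependent.pair_iff.mp hind
  -- set up coordinates
  set n : ℝ × ℝ → ℝ := fun v => ‖v.1 • e1 + v.2 • e2‖ with hn
  set G : ℝ × ℝ → ℝ := fun v => v.1 ^ 2 + v.2 ^ 2 with hG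
  have hncont : Continuous n := by
    apply Continuous.norm
    exact ((continuous_fst.smul continuous_const).add (continuous_snd.smul continuous_const))
  have hGcont : Continuous G := by
    apply Continuous.add <;> [exact (continuous_pow 2).comp continuous_fst;
      exact (continuous_pow 2).comp continuous_snd]
  have hn0 : ∀ v : ℝ × ℝ, n v = 0 → v = 0 := by
    intro v hv
    rw [hn] at hv
    simp only [norm_eq_zero] at hv
    obtain ⟨h1', h2'⟩ := hpair _ _ hv
    exact Prod.ext h1' h2'
  have hnsmul : ∀ (c : ℝ) (v : ℝ × ℝ), n (c • v) = |c| * n v := by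
    intro c v
    have : (c • v).1 • e1 + (c • v).2 • e2 = c • (v.1 • e1 + v.2 • e2) := by
      simp [smul_add, smul_smul]
    rw [hn]
    simp only [this, norm_smul, Real.norm_eq_abs]
  have hGsmul : ∀ (c : ℝ) (v : ℝ × ℝ), G (c • v) = c ^ 2 * G v := by
    intro c v
    simp only [hG, Prod.smul_fst, Prod.smul_snd, smul_eq_mul]
    ring
  have hGnonneg : ∀ v, 0 ≤ G v := fun v => by positivity
  have hGzero : ∀ v : ℝ × ℝ, G v = 0 → v = 0 := by
    intro v hv
    simp only [hG] at hv
    have h1' : v.1 = 0 := by nlinarith [sq_nonneg v.1, sq_nonneg v.2]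
    have h2' : v.2 = 0 := by nlinarith [sq_nonneg v.1, sq_nonneg v.2]
    exact Prod.ext h1' h2'
  -- the Euclidean unit circle is compact; min of n on it is positive
  have hS1cpt : IsCompact {v : ℝ × ℝ | G v = 1} := by
    apply IsCompact.of_isClosed_subset (isCompact_closedBall (0 : ℝ × ℝ) 1)
    · exact isClosed_eq hGcont continuous_const
    · intro v hv
      simp only [Set.mem_setOf_eq, hG] at hv
      rw [Metric.mem_closedBall, dist_zero_right]
      rw [Prod.norm_def]
      have ha : |v.1| ≤ 1 := by nlinarith [sq_abs v.1, sq_abs v.2, abs_nonneg v.1, abs_nonneg v.2]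
      have hb : |v.2| ≤ 1 := by nlinarith [sq_abs v.1, sq_abs v.2, abs_nonneg v.1, abs_nonneg v.2]
      simp only [Real.norm_eq_abs]
      exact max_le ha hb
  have hS1ne : Set.Nonempty {v : ℝ × ℝ | G v = 1} := ⟨(1, 0), by simp [hG]⟩
  have hnpos : ∀ v : ℝ × ℝ, v ≠ 0 → 0 < n v := by
    intro v hv
    rcases (norm_nonneg (v.1 • e1 + v.2 • e2)).lt_or_eq with h | h
    · exact h
    · exact absurd (hn0 v h.symm) hv
  obtain ⟨vm, hvmS, hvmmin⟩ := hS1cpt.exists_isMinOn hS1ne hncont.continuousOn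
  have hm : 0 < n vm := by
    apply hnpos
    intro h
    rw [h] at hvmS
    simp [hG] at hvmS
  set m := n vm with hmdef
  -- lower norm-equivalence: m² G v ≤ (n v)²
  have hlow : ∀ v : ℝ × ℝ, m ^ 2 * G v ≤ (n v) ^ 2 := by
    intro v
    rcases eq_or_ne v 0 with rfl | hv
    · simp [hG, hn]
    · have hGv : 0 < G v := by
        rcases (hGnonneg v).lt_or_eq with h | h
        · exact h
        · exact absurd (hGzero v h.symm) hv
      set t := Real.sqrt (G v) with htdef
      have ht : 0 < t := Real.sqrt_pos.mpr hGv
      have ht2 : t ^ 2 = G v := Real.sq_sqrt (hGnonneg v)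
      have hu : G (t⁻¹ • v) = 1 := by
        rw [hGsmul]
        field_simp
        rw [ht2]
      have hmu : m ≤ n (t⁻¹ • v) := hvmmin hu
      rw [hnsmul, abs_of_pos (by positivity)] at hmu
      rw [show t⁻¹ * n v = n v / t by ring] at hmu
      have h2 : m * t ≤ n v := (le_div_iff₀ ht).mp hmu
      nlinarith [mul_self_le_mul_self (by positivity : (0:ℝ) ≤ m * t) h2, ht2, hm.le, ht.le]
  -- unit ball of n is compact
  have hBcpt : IsCompact {v : ℝ × ℝ | n v ≤ 1} := by
    apply IsCompact.of_isClosed_subset (isCompact_closedBall (0 : ℝ × ℝ) (1/m))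
    · exact isClosed_le hncont continuous_const
    · intro v hv
      simp only [Set.mem_setOf_eq] at hv
      have h1' : m ^ 2 * G v ≤ 1 := by
        refine le_trans (hlow v) ?_
        nlinarith [norm_nonneg (v.1 • e1 + v.2 • e2), hv]
      rw [Metric.mem_closedBall, dist_zero_right, Prod.norm_def]
      simp only [Real.norm_eq_abs]
      have hGv : G v ≤ 1 / m ^ 2 := by
        rw [le_div_iff₀ (by positivity)]
        linarith [h1']
      have hprod : ∀ a : ℝ, m ^ 2 * a ^ 2 ≤ 1 → |a| ≤ 1 / m := by
        intro a hA
        have h5 : |m * a| ≤ 1 := abs_le_one_iff_mul_self_le_one.mpr (by nlinarith)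
        rw [abs_mul, abs_of_pos hm] at h5
        rw [le_div_iff₀ hm, mul_comm]
        exact h5
      have h1'' : m ^ 2 * (v.1 ^ 2 + v.2 ^ 2) ≤ 1 := h1'
      have ha : |v.1| ≤ 1/m := hprod v.1 (by nlinarith [sq_nonneg v.2, sq_nonneg m])
      have hb : |v.2| ≤ 1/m := hprod v.2 (by nlinarith [sq_nonneg v.1, sq_nonneg m])
      exact max_le ha hb
  have hBne : Set.Nonempty {v : ℝ × ℝ | n v ≤ 1} := ⟨0, by simp [hn]⟩
  obtain ⟨v0, hv0B, hv0max⟩ := hBcpt.exists_isMaxOn hBne hGcont.continuousOn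
  -- G v0 > 0
  have he1norm : (0:ℝ) < ‖e1‖ := norm_pos_iff.mpr he1
  have hu1 : n (‖e1‖⁻¹, 0) = 1 := by
    simp [hn, norm_smul, abs_of_pos (by positivity : (0:ℝ) < ‖e1‖⁻¹)]
    field_simp
  have hu1B : (‖e1‖⁻¹, (0:ℝ)) ∈ {v : ℝ × ℝ | n v ≤ 1} := le_of_eq hu1
  have hGv0pos : 0 < G v0 := by
    have := hv0max hu1B
    simp only [Set.mem_setOf_eq] at this
    have hGu1 : 0 < G (‖e1‖⁻¹, (0:ℝ)) := by
      simp only [hG]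
      positivity
    exact lt_of_lt_of_le hGu1 this
  have hv0ne : v0 ≠ 0 := fun h => by
    rw [h] at hGv0pos; simp [hG] at hGv0pos
  have hnv0pos : 0 < n v0 := hnpos v0 hv0ne
  -- n v0 = 1
  have hnv0 : n v0 = 1 := by
    have hle : n v0 ≤ 1 := hv0B
    rcases lt_or_eq_of_le hle with h | h
    · exfalso
      set s := n v0 with hs
      have hsmem : n ((s⁻¹) • v0) ≤ 1 := by
        rw [hnsmul, abs_of_pos (by positivity)]
        rw [inv_mul_cancel₀ hnv0pos.ne']
      have := hv0max hsmem
      simp only [Set.mem_setOf_eq] at this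
      rw [hGsmul] at this
      have hs2 : 1 < (s⁻¹) ^ 2 := by
        rw [← one_pow 2]
        apply pow_lt_pow_left₀ _ (by norm_num) (by norm_num)
        rw [lt_inv_comm₀] <;> [skip; norm_num; exact hnv0pos]
        simpa using h
      have hmul := mul_lt_mul_of_pos_right hs2 hGv0pos
      rw [one_mul] at hmul
      linarith
    · exact h
  -- key inequality: G v ≤ G v0 * (n v)^2
  have hkey : ∀ v : ℝ × ℝ, G v ≤ G v0 * (n v) ^ 2 := by
    intro v
    rcases eq_or_ne v 0 with rfl | hv
    · simp [hG, hn]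
    · have hnv : 0 < n v := hnpos v hv
      have hmem : n ((n v)⁻¹ • v) ≤ 1 := by
        rw [hnsmul, abs_of_pos (by positivity), inv_mul_cancel₀ hnv.ne']
      have := hv0max hmem
      simp only [Set.mem_setOf_eq] at this
      rw [hGsmul] at this
      have h2 : ((n v)⁻¹) ^ 2 * G v ≤ G v0 := this
      calc G v = (n v) ^ 2 * (((n v)⁻¹) ^ 2 * G v) := by
            field_simp
        _ ≤ (n v) ^ 2 * G v0 := by
            apply mul_le_mul_of_nonneg_left h2 (by positivity)
        _ = G v0 * (n v) ^ 2 := by ring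
  -- construct the pair x0, y
  set w0 : ℝ × ℝ := (-v0.2, v0.1) with hw0
  have hGw0 : G w0 = G v0 := by simp [hG, hw0]; ring
  have hw0ne : w0 ≠ 0 := by
    intro h
    apply hv0ne
    have h1' : v0.1 = 0 := congrArg Prod.snd h
    have h2' : v0.2 = 0 := by
      have := congrArg Prod.fst h
      simpa [hw0] using this
    exact Prod.ext h1' h2'
  have hnw0 : 0 < n w0 := hnpos w0 hw0ne
  set w : ℝ × ℝ := (n w0)⁻¹ • w0 with hw
  have hnw : n w = 1 := by
    rw [hw, hnsmul, abs_of_pos (by positivity), inv_mul_cancel₀ hnw0.ne']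
  have hGw : G w = G v0 / (n w0) ^ 2 := by
    rw [hw, hGsmul, hGw0]
    field_simp
  set μ := ((n w0) ^ 2)⁻¹ with hμ
  refine ⟨μ, by positivity, fun τ => ?_⟩
  -- orthogonality: G (v0 + τ • w) = G v0 * (1 + μ τ²)
  have horth : ∀ σ : ℝ, G (v0 + σ • w) = G v0 * (1 + μ * σ ^ 2) := by
    intro σ
    have hw1 : w.1 = (n w0)⁻¹ * (-v0.2) := rfl
    have hw2 : w.2 = (n w0)⁻¹ * v0.1 := rfl
    simp only [hG, Prod.fst_add, Prod.snd_add, Prod.smul_fst, Prod.smul_snd, smul_eq_mul,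
      hw1, hw2, hμ]
    have hG0 : v0.1 ^ 2 + v0.2 ^ 2 = G v0 := rfl
    field_simp
    ring
  -- norms of x0 ± τ y
  set x0 : X := v0.1 • e1 + v0.2 • e2 with hx0
  set y : X := w.1 • e1 + w.2 • e2 with hy
  have hx0norm : ‖x0‖ = 1 := hnv0
  have hynorm : ‖y‖ = 1 := hnw
  have expand : ∀ σ : ℝ, (v0.1 + σ * w.1) • e1 + (v0.2 + σ * w.2) • e2
      = (v0.1 • e1 + v0.2 • e2) + σ • (w.1 • e1 + w.2 • e2) := by
    intro σ
    rw [add_smul, add_smul, smul_add, mul_smul, mul_smul]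
    abel
  have hplus : x0 + τ • y = (v0 + τ • w).1 • e1 + (v0 + τ • w).2 • e2 := by
    show x0 + τ • y = (v0.1 + τ * w.1) • e1 + (v0.2 + τ * w.2) • e2
    rw [expand τ, hx0, hy]
  have hminus : x0 - τ • y = (v0 + (-τ) • w).1 • e1 + (v0 + (-τ) • w).2 • e2 := by
    show x0 - τ • y = (v0.1 + (-τ) * w.1) • e1 + (v0.2 + (-τ) * w.2) • e2
    rw [expand (-τ), hx0, hy, neg_smul, ← sub_eq_add_neg]
  have hbound : ∀ σ : ℝ, Real.sqrt (1 + μ * σ ^ 2) ≤ n (v0 + σ • w) := by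
    intro σ
    have h1' := hkey (v0 + σ • w)
    rw [horth σ] at h1'
    have h2 : 1 + μ * σ ^ 2 ≤ (n (v0 + σ • w)) ^ 2 := by
      have := (mul_le_mul_iff_right₀ hGv0pos).mp h1'
      exact this
    calc Real.sqrt (1 + μ * σ ^ 2) ≤ Real.sqrt ((n (v0 + σ • w)) ^ 2) :=
          Real.sqrt_le_sqrt h2
      _ = n (v0 + σ • w) := Real.sqrt_sq (norm_nonneg _)
  have hplusnorm : Real.sqrt (1 + μ * τ ^ 2) ≤ ‖x0 + τ • y‖ := by
    rw [hplus]; exact hbound τ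
  have hminusnorm : Real.sqrt (1 + μ * τ ^ 2) ≤ ‖x0 - τ • y‖ := by
    rw [hminus]
    have := hbound (-τ)
    simpa [hn] using this
  have := le_rhoSpace X hx0norm hynorm τ
  linarith

end RhoSpace

/-! ### Main theorem -/

set_option maxHeartbeats 1600000 in
/-- for `F = (1/p)‖·‖^p` and a duality selection `j_p`, for every `τ̄ > 0`
there is `C > 0` with `ρ_{F,x}^{j_p(x)}(τ) ≤ C·ρ_X(τ)` for all `x ∈ S_X`, `0 < τ ≤ τ̄`. -/
theorem stmt10 (X : Type*) [NormedAddCommGroup X] [NormedSpace ℝ X] [CompleteSpace X]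
    (hdim : 2 ≤ Module.rank ℝ X)
    (p : ℝ) (hp : 1 < p)
    (jp : X → X →L[ℝ] ℝ) (hjp : IsDualitySelection p jp) :
    ∀ τbar : ℝ, 0 < τbar → ∃ C : ℝ, 0 < C ∧
      ∀ x : X, ‖x‖ = 1 → ∀ τ : ℝ, 0 < τ → τ ≤ τbar →
        rhoF (fun z : X => (1 / p) * ‖z‖ ^ p) x (jp x) τ ≤
          ENNReal.ofReal (C * rhoSpace X τ) := by
  intro τbar hτbar
  obtain ⟨μ, hμ, hrho⟩ := rhoSpace_lower X hdim
  set D : ℝ := 1 + Real.sqrt (1 + μ * τbar ^ 2) with hD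
  have hDpos : 0 < D := by
    have : (0:ℝ) ≤ Real.sqrt (1 + μ * τbar ^ 2) := Real.sqrt_nonneg _
    linarith
  set c : ℝ := μ / D with hc
  have hcpos : 0 < c := by positivity
  -- lower bound: c τ² ≤ ρ_X(τ) for 0 < τ ≤ τbar
  have hlower : ∀ τ : ℝ, 0 < τ → τ ≤ τbar → c * τ ^ 2 ≤ rhoSpace X τ := by
    intro τ hτ hττ
    have hs : 0 ≤ μ * τ ^ 2 := by positivity
    have hsS : μ * τ ^ 2 ≤ μ * τbar ^ 2 := by
      apply mul_le_mul_of_nonneg_left _ hμ.le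
      exact pow_le_pow_left₀ hτ.le hττ 2
    have := aux_sqrt_lower hs hsS
    have h2 := hrho τ
    calc c * τ ^ 2 = (μ * τ ^ 2) / D := by rw [hc]; ring
      _ ≤ Real.sqrt (1 + μ * τ ^ 2) - 1 := this
      _ ≤ rhoSpace X τ := h2
  set B : ℝ := 1 + τbar with hB
  have hB1 : 1 ≤ B := by linarith
  set L : ℝ := 1 + (p - 1) * max 1 (B ^ (p - 2)) with hL
  have hLpos : 0 < L := by
    have : (1:ℝ) ≤ max 1 (B ^ (p - 2)) := le_max_left _ _
    nlinarith
  refine ⟨L / c + 2, by positivity, fun x hx τ hτ hττbar => ?_⟩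
  have hρpos : 0 < rhoSpace X τ :=
    lt_of_lt_of_le (by positivity) (hlower τ hτ hττbar)
  -- facts about jp x
  have hjx := hjp x
  have hjxnorm : ‖jp x‖ = 1 := by rw [hjx.2, hx, Real.one_rpow]
  have hjxx : jp x x = 1 := by rw [hjx.1, hjxnorm, hx, one_mul]
  have hjple : ∀ z : X, jp x z ≤ ‖z‖ := by
    intro z
    calc jp x z ≤ |jp x z| := le_abs_self _
      _ = ‖jp x z‖ := (Real.norm_eq_abs _).symm
      _ ≤ ‖jp x‖ * ‖z‖ := (jp x).le_opNorm z
      _ = ‖z‖ := by rw [hjxnorm, one_mul]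
  -- main pointwise bound
  rw [rhoF]
  apply iSup₂_le
  intro y hy
  simp only [Set.mem_setOf_eq] at hy
  apply ENNReal.ofReal_le_ofReal
  set N : ℝ := ‖y‖ with hN
  have hNnonneg : 0 ≤ N := norm_nonneg _
  have hN1 : |N - 1| ≤ τ := by
    rw [hN, ← hx, ← hy]
    exact abs_norm_sub_norm_le y x
  have hNB : N ≤ B := by
    have := abs_le.mp hN1
    rw [hB]; linarith
  -- the Bregman divergence
  have hbreg : breg (fun z : X => (1 / p) * ‖z‖ ^ p) (jp x) y x
      = ((N ^ p - 1) / p - (N - 1)) + (N - jp x y) := by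
    rw [breg]
    simp only [map_sub, hjxx, hx, Real.one_rpow]
    field_simp
    ring
  have hA : 0 ≤ N - jp x y := by
    have := hjple y
    linarith
  have hψ : 0 ≤ (N ^ p - 1) / p - (N - 1) := aux_psi_nonneg hp hNnonneg
  have habs : |breg (fun z : X => (1 / p) * ‖z‖ ^ p) (jp x) y x|
      = breg (fun z : X => (1 / p) * ‖z‖ ^ p) (jp x) y x := by
    apply abs_of_nonneg
    rw [hbreg]
    linarith
  rw [habs, hbreg]
  -- bound the A-term by 2 ρ
  set u : X := τ⁻¹ • (y - x) with hu
  have hunorm : ‖u‖ = 1 := by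
    rw [hu, norm_smul, Real.norm_eq_abs, abs_of_pos (by positivity), hy,
      inv_mul_cancel₀ hτ.ne']
  have hxu : x + τ • u = y := by
    rw [hu, smul_smul, mul_inv_cancel₀ hτ.ne', one_smul]
    abel
  have hAbound : N - jp x y ≤ 2 * rhoSpace X τ := by
    have hmem := le_rhoSpace X hx hunorm τ
    rw [hxu] at hmem
    have h2 : 2 - jp x y ≤ ‖x - τ • u‖ := by
      have h3 : jp x (x - τ • u) ≤ ‖x - τ • u‖ := hjple _
      have h4 : jp x (x - τ • u) = 2 - jp x y := by
        have : jp x (τ • u) = jp x y - 1 := by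
          have : τ • u = y - x := by
            rw [hu, smul_smul, mul_inv_cancel₀ hτ.ne', one_smul]
          rw [this, map_sub, hjxx]
        rw [map_sub, hjxx, this]
        ring
      linarith [h4 ▸ h3]
    -- hmem : (‖y‖ + ‖x - τ•u‖)/2 - 1 ≤ ρ
    have : (N + ‖x - τ • u‖) / 2 - 1 ≤ rhoSpace X τ := hmem
    linarith
  -- bound the ψ-term
  have hψbound : (N ^ p - 1) / p - (N - 1) ≤ L * τ ^ 2 := by
    have h1 := aux_psi_bound hp hB1 hNnonneg hNB
    have h2 : (N - 1) ^ 2 ≤ τ ^ 2 := by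
      have := abs_le.mp hN1
      nlinarith
    calc (N ^ p - 1) / p - (N - 1) ≤ L * (N - 1) ^ 2 := h1
      _ ≤ L * τ ^ 2 := mul_le_mul_of_nonneg_left h2 hLpos.le
  -- combine
  have hτ2 : τ ^ 2 ≤ rhoSpace X τ / c := by
    rw [le_div_iff₀ hcpos]
    calc τ ^ 2 * c = c * τ ^ 2 := by ring
      _ ≤ rhoSpace X τ := hlower τ hτ hττbar
  have hLτ : L * τ ^ 2 ≤ (L / c) * rhoSpace X τ := by
    calc L * τ ^ 2 ≤ L * (rhoSpace X τ / c) := by nlinarith [hLpos]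
      _ = (L / c) * rhoSpace X τ := by ring
  calc ((N ^ p - 1) / p - (N - 1)) + (N - jp x y)
      ≤ L * τ ^ 2 + 2 * rhoSpace X τ := by linarith
    _ ≤ (L / c) * rhoSpace X τ + 2 * rhoSpace X τ := by linarith
    _ = (L / c + 2) * rhoSpace X τ := by ring
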